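/- Let N ≥ 1 and ξ = (ξ_{i,j})_{(i,j)∈B_N} with all ξ_{i,j} > 0, r₀ > 0. Define A_N(ξ) ∈ ℝ^{2^N × 2^N} by a_{ij} = r₀(1 + Σ_{(k,l) ∈ Π_{0→(N,i)}(N - ν_{i-1,j-1})} 1/ξ_{k,l}). Then for any outlet flow vector q ∈ ℝ^{2^N}, the quadratic form qᵀ A_N(ξ) q equals r₀ Φ² + Σ_{(i,j) ∈ B_N} r₀ q_{i,j}²/ξ_{i,j}, where Φ = Σ_j q_{N,j} and q_{i,j} denotes the induced flow in branch (i,j), defined recursively by q_{i,j} = q_{i+1,2j-1} + q_{i+1,2j}. -/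

import Mathlib

open Finset Matrix

/-- `ν_{i,j}`: the smallest `k` such that the binary digits of `i` and `j`
agree from position `k` on. -/
noncomputable def nuIdx (i j : ℕ) : ℕ :=
  sInf {k | ∀ l, k ≤ l → i.testBit l = j.testBit l}

/-- The resistance matrix `A_N(ξ)` of the dyadic tree (0-based outlet
indices): `a_{ij} = r₀ (1 + ∑_{(k,l) ∈ Π_{0→(N,i)}(N-ν_{i-1,j-1})} 1/ξ_{k,l})`,
the ancestor of outlet `i` at level `k` being branch `(k, (i-1)/2^{N-k}+1)`. -/
noncomputable def AN (N : ℕ) (r0 : ℝ) (ξ : ℕ → ℕ → ℝ) :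
    Matrix (Fin (2 ^ N)) (Fin (2 ^ N)) ℝ := fun i j =>
  r0 * (1 + ∑ k ∈ Finset.Icc 1 (N - nuIdx i.1 j.1),
    1 / ξ k (i.1 / 2 ^ (N - k) + 1))

lemma nuIdx_le_iff {i j m : ℕ} (hi : i < 2 ^ m) (hj : j < 2 ^ m) :
    ∀ k, (nuIdx i j ≤ k ↔ i / 2 ^ k = j / 2 ^ k) := by
  intro k
  have hmem : ∀ t, (t ∈ {k | ∀ l, k ≤ l → i.testBit l = j.testBit l}) ↔ i / 2 ^ t = j / 2 ^ t := by
    intro t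
    simp only [Set.mem_setOf_eq]
    constructor
    · intro h
      rw [← Nat.shiftRight_eq_div_pow, ← Nat.shiftRight_eq_div_pow]
      apply Nat.eq_of_testBit_eq
      intro l
      simp only [Nat.testBit_shiftRight]
      exact h _ (Nat.le_add_right _ _)
    · intro h l hl
      have : i >>> t = j >>> t := by
        rwa [Nat.shiftRight_eq_div_pow, Nat.shiftRight_eq_div_pow]
      have := congrArg (fun x => Nat.testBit x (l - t)) this
      simpa [Nat.testBit_shiftRight, Nat.add_sub_cancel' hl] using this
  have hne : ({k | ∀ l, k ≤ l → i.testBit l = j.testBit l}).Nonempty := by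
    refine ⟨m, ?_⟩
    intro l hl
    rw [Nat.testBit_eq_false_of_lt (lt_of_lt_of_le hi (Nat.pow_le_pow_right (by norm_num) hl)),
      Nat.testBit_eq_false_of_lt (lt_of_lt_of_le hj (Nat.pow_le_pow_right (by norm_num) hl))]
  rw [← hmem k]
  constructor
  · intro h
    have := Nat.sInf_mem hne
    intro l hl
    exact this l (le_trans h hl)
  · exact Nat.sInf_le

lemma branch_flow (N : ℕ) (q : Fin (2^N) → ℝ) (qb : ℕ → ℕ → ℝ)
    (hleaf : ∀ j : Fin (2 ^ N), qb N (j.1 + 1) = q j)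
    (hrec : ∀ i ∈ Finset.Icc 1 (N - 1), ∀ j ∈ Finset.Icc 1 (2 ^ i),
      qb i j = qb (i + 1) (2 * j - 1) + qb (i + 1) (2 * j)) :
    ∀ d k, k + d = N → 1 ≤ k → ∀ l, l < 2^k →
      qb k (l+1) = ∑ i ∈ Finset.univ.filter (fun i : Fin (2^N) => i.1 / 2^(N-k) = l), q i := by
  intro d
  induction d with
  | zero =>
    intro k hk _ l hl
    have hkN : k = N := by omega
    subst hkN
    have : (Finset.univ.filter (fun i : Fin (2^k) => i.1 / 2^(k-k) = l))
        = {(⟨l, hl⟩ : Fin (2^k))} := by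
      ext i
      simp [Nat.sub_self, Fin.ext_iff]
    rw [this, Finset.sum_singleton, ← hleaf ⟨l, hl⟩]
  | succ d ih =>
    intro k hk hk1 l hl
    have h1 : qb k (l+1) = qb (k+1) (2*l+1) + qb (k+1) (2*l+2) := by
      have := hrec k (by simp; omega) (l+1) (by simp; omega)
      simpa [Nat.mul_add, Nat.add_sub_cancel] using this
    have e1 := ih (k+1) (by omega) (by omega) (2*l) (by have := Nat.pow_succ 2 k; omega)
    have e2 := ih (k+1) (by omega) (by omega) (2*l+1) (by have := Nat.pow_succ 2 k; omega)
    rw [h1]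
    have : 2*l + 2 = (2*l+1) + 1 := by ring
    rw [this] at *
    rw [e1, e2]
    rw [Finset.sum_filter, Finset.sum_filter, Finset.sum_filter, ← Finset.sum_add_distrib]
    apply Finset.sum_congr rfl
    intro i _
    have hpow : 2^(N-k) = 2^(N-(k+1)) * 2 := by
      rw [← Nat.pow_succ]
      congr 1
      omega
    have hdiv : i.1 / 2^(N-k) = i.1 / 2^(N-(k+1)) / 2 := by
      rw [hpow, Nat.div_div_eq_div_mul]
    split_ifs with h1' h2' h2' h3' h3' <;> simp_all <;> omega

/-- The quadratic form of the resistance matrix is the dissipated energy: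
`qᵀ A_N(ξ) q = r₀ Φ² + ∑_{(i,j)∈B_N} r₀ q_{i,j}²/ξ_{i,j}` where `Φ` is the
total outlet flow and the branch flows `qb` are defined recursively from the
outlet flows by `qb_{i,j} = qb_{i+1,2j-1} + qb_{i+1,2j}`. -/
theorem stmt13 (N : ℕ) (hN : 1 ≤ N) (r0 : ℝ) (hr0 : 0 < r0)
    (ξ : ℕ → ℕ → ℝ)
    (hξ : ∀ i ∈ Finset.Icc 1 N, ∀ j ∈ Finset.Icc 1 (2 ^ i), 0 < ξ i j)
    (q : Fin (2 ^ N) → ℝ) (qb : ℕ → ℕ → ℝ)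
    (hleaf : ∀ j : Fin (2 ^ N), qb N (j.1 + 1) = q j)
    (hrec : ∀ i ∈ Finset.Icc 1 (N - 1), ∀ j ∈ Finset.Icc 1 (2 ^ i),
      qb i j = qb (i + 1) (2 * j - 1) + qb (i + 1) (2 * j)) :
    q ⬝ᵥ (AN N r0 ξ).mulVec q =
      r0 * (∑ j, q j) ^ 2 +
        ∑ i ∈ Finset.Icc 1 N, ∑ j ∈ Finset.Icc 1 (2 ^ i),
          r0 * (qb i j) ^ 2 / ξ i j := by
  classical
  have hnu : ∀ i j : Fin (2^N), nuIdx i.1 j.1 ≤ N := by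
    intro i j
    rw [nuIdx_le_iff i.2 j.2 N]
    rw [Nat.div_eq_of_lt i.2, Nat.div_eq_of_lt j.2]
  -- Step 1: expand to double sum with indicator form
  have step1 : q ⬝ᵥ (AN N r0 ξ).mulVec q
      = (∑ i : Fin (2^N), ∑ j : Fin (2^N), r0 * q i * q j)
        + ∑ i : Fin (2^N), ∑ j : Fin (2^N), ∑ k ∈ Finset.Icc 1 N,
            (if i.1 / 2^(N-k) = j.1/2^(N-k)
              then r0 * q i * q j * (1 / ξ k (i.1/2^(N-k)+1)) else 0) := by
    simp only [dotProduct, mulVec, AN]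
    rw [← Finset.sum_add_distrib]
    apply Finset.sum_congr rfl
    intro i _
    rw [Finset.mul_sum, ← Finset.sum_add_distrib]
    apply Finset.sum_congr rfl
    intro j _
    have hIcc : Finset.Icc 1 (N - nuIdx i.1 j.1)
        = (Finset.Icc 1 N).filter (fun k => k ≤ N - nuIdx i.1 j.1) := by
      ext k
      simp only [Finset.mem_Icc, Finset.mem_filter]
      have := hnu i j
      omega
    rw [hIcc]
    have hcond : ∀ k ∈ Finset.Icc 1 N,
        (if k ≤ N - nuIdx i.1 j.1 then 1 / ξ k (i.1/2^(N-k)+1) else 0)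
        = (if i.1 / 2^(N-k) = j.1/2^(N-k) then 1 / ξ k (i.1/2^(N-k)+1) else 0) := by
      intro k hk
      simp only [Finset.mem_Icc] at hk
      congr 1
      have h1 : k ≤ N - nuIdx i.1 j.1 ↔ nuIdx i.1 j.1 ≤ N - k := by
        have := hnu i j; omega
      rw [eq_iff_iff, h1, nuIdx_le_iff i.2 j.2]
    calc q i * (r0 * (1 + ∑ k ∈ (Finset.Icc 1 N).filter (fun k => k ≤ N - nuIdx i.1 j.1),
            1 / ξ k (i.1/2^(N-k)+1)) * q j)
        = r0 * q i * q j + ∑ k ∈ Finset.Icc 1 N, (q i * r0 * q j) *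
            (if k ≤ N - nuIdx i.1 j.1 then 1 / ξ k (i.1/2^(N-k)+1) else 0) := by
          rw [← Finset.mul_sum, ← Finset.sum_filter]
          ring
      _ = _ := by
          congr 1
          apply Finset.sum_congr rfl
          intro k hk
          rw [hcond k hk]
          split_ifs <;> ring
  rw [step1]
  congr 1
  · rw [sq, Finset.sum_mul_sum, Finset.mul_sum]
    apply Finset.sum_congr rfl
    intro i _
    rw [Finset.mul_sum]
    apply Finset.sum_congr rfl
    intro j _
    ring
  -- Step 2: swap sums
  have swap : (∑ i : Fin (2^N), ∑ j : Fin (2^N), ∑ k ∈ Finset.Icc 1 N,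
            (if i.1 / 2^(N-k) = j.1/2^(N-k)
              then r0 * q i * q j * (1 / ξ k (i.1/2^(N-k)+1)) else 0))
      = ∑ k ∈ Finset.Icc 1 N, ∑ i : Fin (2^N), ∑ j : Fin (2^N),
            (if i.1 / 2^(N-k) = j.1/2^(N-k)
              then r0 * q i * q j * (1 / ξ k (i.1/2^(N-k)+1)) else 0) := by
    rw [Finset.sum_congr rfl (fun i _ => Finset.sum_comm)]
    exact Finset.sum_comm
  rw [swap]
  apply Finset.sum_congr rfl
  intro k hk
  simp only [Finset.mem_Icc] at hk
  have hmap : ∀ i ∈ (Finset.univ : Finset (Fin (2^N))), i.1/2^(N-k) ∈ Finset.range (2^k) := by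
    intro i _
    rw [Finset.mem_range, Nat.div_lt_iff_lt_mul (Nat.pow_pos (n := N-k) (by norm_num : 0 < 2))]
    calc i.1 < 2^N := i.2
      _ ≤ 2^k * 2^(N-k) := by rw [← pow_add]; apply Nat.pow_le_pow_right <;> omega
  rw [← Finset.sum_fiberwise_of_maps_to hmap]
  have main : ∀ l ∈ Finset.range (2^k),
      (∑ i ∈ Finset.univ.filter (fun i : Fin (2^N) => i.1/2^(N-k) = l),
        ∑ j : Fin (2^N), if i.1/2^(N-k) = j.1/2^(N-k)
          then r0*q i*q j*(1/ξ k (i.1/2^(N-k)+1)) else 0)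
      = r0 * qb k (l+1)^2 / ξ k (l+1) := by
    intro l hl
    rw [Finset.mem_range] at hl
    have hT := branch_flow N q qb hleaf hrec (N-k) k (by omega) (by omega) l hl
    have inner : ∀ i ∈ Finset.univ.filter (fun i : Fin (2^N) => i.1/2^(N-k) = l),
        (∑ j : Fin (2^N), if i.1/2^(N-k) = j.1/2^(N-k)
            then r0*q i*q j*(1/ξ k (i.1/2^(N-k)+1)) else 0)
        = q i * (r0 * (1/ξ k (l+1)) *
            ∑ j ∈ Finset.univ.filter (fun j : Fin (2^N) => j.1/2^(N-k) = l), q j) := by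
      intro i hi
      rw [Finset.mem_filter] at hi
      rw [Finset.mul_sum, Finset.mul_sum, Finset.sum_filter]
      apply Finset.sum_congr rfl
      intro j _
      rw [hi.2]
      split_ifs with h h' h'
      · ring
      · exact absurd h.symm h'
      · exact absurd h'.symm h
      · ring
    rw [Finset.sum_congr rfl inner, ← Finset.sum_mul, ← hT]
    ring
  rw [Finset.sum_congr rfl main]
  have himg : Finset.Icc 1 (2^k) = Finset.image (·+1) (Finset.range (2^k)) := by
    ext x
    simp only [Finset.mem_Icc, Finset.mem_image, Finset.mem_range]
    constructor
    · intro hx; exact ⟨x-1, by omega, by omega⟩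
    · rintro ⟨y, hy, rfl⟩; omega
  rw [himg, Finset.sum_image (fun a _ b _ h => by omega)]
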